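/- arXiv:2011.06890 — 2 statements merged into one kernel-verified Lean document; each statement's English description precedes it below -/
import Mathlib

section
/- Let M_u and L_u be integers with 0 < L_u < M_u, let S be a nonnegative integer (the number of bits per constellation symbol), and set η = L_u/M_u, I = ⌊log₂ C(M_u, L_u)⌋ (where C(M_u,L_u) is the binomial coefficient), R_u = I + L_u·S and R̄ = R_u/M_u. Then there exists a real constant C with C_d < C ≤ C_u, where C_d = log₂(π/(2e⁴)) − log₂(η − η²) and C_u = log₂(e²/(4π²)) − log₂(η − η²), such that R̄ = η·S + H₂(η) + (C − log₂ M_u)/(2 M_u). -/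
open Real

section Aux
open Filter Topology

lemma sqrtpi_le_stirlingSeq (n : ℕ) : Real.sqrt Real.pi ≤ Stirling.stirlingSeq (n + 1) := by
  have h' : Tendsto (Stirling.stirlingSeq ∘ Nat.succ) atTop (𝓝 (Real.sqrt Real.pi)) :=
    (tendsto_add_atTop_iff_nat 1).mpr Stirling.tendsto_stirlingSeq_sqrt_pi
  exact Stirling.stirlingSeq'_antitone.le_of_tendsto h' n

lemma stirlingSeq_le (n : ℕ) : Stirling.stirlingSeq (n + 1) ≤ Real.exp 1 / Real.sqrt 2 := by
  have := Stirling.stirlingSeq'_antitone (Nat.zero_le n)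
  simpa using this

lemma fact_sq_lb (n : ℕ) (hn : n ≠ 0) :
    2 * Real.pi * n * (n : ℝ) ^ (2 * n) ≤ ((n.factorial : ℕ) : ℝ) ^ 2 * Real.exp 1 ^ (2 * n) := by
  obtain ⟨m, rfl⟩ := Nat.exists_eq_succ_of_ne_zero hn
  set n := m + 1
  have hn0 : (0 : ℝ) < n := by positivity
  have hd : (0 : ℝ) < Real.sqrt (2 * n) * ((n : ℝ) / Real.exp 1) ^ n := by positivity
  have h1 : Real.sqrt Real.pi ≤ ((n.factorial : ℕ) : ℝ) / (Real.sqrt (2 * n) * ((n : ℝ) / Real.exp 1) ^ n) :=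
    sqrtpi_le_stirlingSeq m
  rw [le_div_iff₀ hd] at h1
  have h2 : (Real.sqrt Real.pi * (Real.sqrt (2 * n) * ((n : ℝ) / Real.exp 1) ^ n)) ^ 2
      ≤ ((n.factorial : ℕ) : ℝ) ^ 2 := by
    apply pow_le_pow_left₀ (by positivity) h1
  have h3 : (Real.sqrt Real.pi * (Real.sqrt (2 * n) * ((n : ℝ) / Real.exp 1) ^ n)) ^ 2
      = 2 * Real.pi * n * ((n : ℝ) / Real.exp 1) ^ (2 * n) := by
    rw [mul_pow, mul_pow, Real.sq_sqrt Real.pi_pos.le, Real.sq_sqrt (by positivity),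
      ← pow_mul, mul_comm n 2]
    ring
  have h4 : ((n : ℝ) / Real.exp 1) ^ (2 * n) * Real.exp 1 ^ (2 * n) = (n : ℝ) ^ (2 * n) := by
    rw [← mul_pow, div_mul_cancel₀]
    exact Real.exp_ne_zero 1
  calc 2 * Real.pi * n * (n : ℝ) ^ (2 * n)
      = (2 * Real.pi * n * ((n : ℝ) / Real.exp 1) ^ (2 * n)) * Real.exp 1 ^ (2 * n) := by
        rw [mul_assoc (2 * Real.pi * (n:ℝ)), h4]
    _ ≤ ((n.factorial : ℕ) : ℝ) ^ 2 * Real.exp 1 ^ (2 * n) := by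
        apply mul_le_mul_of_nonneg_right _ (by positivity)
        rw [← h3]; exact h2

lemma fact_sq_ub (n : ℕ) (hn : n ≠ 0) :
    ((n.factorial : ℕ) : ℝ) ^ 2 * Real.exp 1 ^ (2 * n) ≤ Real.exp 1 ^ 2 * n * (n : ℝ) ^ (2 * n) := by
  obtain ⟨m, rfl⟩ := Nat.exists_eq_succ_of_ne_zero hn
  set n := m + 1
  have hn0 : (0 : ℝ) < n := by positivity
  have hd : (0 : ℝ) < Real.sqrt (2 * n) * ((n : ℝ) / Real.exp 1) ^ n := by positivity
  have h1 : ((n.factorial : ℕ) : ℝ) / (Real.sqrt (2 * n) * ((n : ℝ) / Real.exp 1) ^ n)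
      ≤ Real.exp 1 / Real.sqrt 2 := stirlingSeq_le m
  rw [div_le_iff₀ hd] at h1
  have h2 : ((n.factorial : ℕ) : ℝ) ^ 2
      ≤ (Real.exp 1 / Real.sqrt 2 * (Real.sqrt (2 * n) * ((n : ℝ) / Real.exp 1) ^ n)) ^ 2 := by
    apply pow_le_pow_left₀ (by positivity) h1
  have h3 : (Real.exp 1 / Real.sqrt 2 * (Real.sqrt (2 * n) * ((n : ℝ) / Real.exp 1) ^ n)) ^ 2
      = Real.exp 1 ^ 2 * n * ((n : ℝ) / Real.exp 1) ^ (2 * n) := by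
    rw [mul_pow, mul_pow, div_pow, Real.sq_sqrt (by norm_num : (0:ℝ) ≤ 2),
      Real.sq_sqrt (by positivity : (0:ℝ) ≤ 2 * (n:ℝ)), ← pow_mul, mul_comm n 2]
    field_simp
  have h4 : ((n : ℝ) / Real.exp 1) ^ (2 * n) * Real.exp 1 ^ (2 * n) = (n : ℝ) ^ (2 * n) := by
    rw [← mul_pow, div_mul_cancel₀]
    exact Real.exp_ne_zero 1
  calc ((n.factorial : ℕ) : ℝ) ^ 2 * Real.exp 1 ^ (2 * n)
      ≤ (Real.exp 1 ^ 2 * n * ((n : ℝ) / Real.exp 1) ^ (2 * n)) * Real.exp 1 ^ (2 * n) := by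
        apply mul_le_mul_of_nonneg_right _ (by positivity)
        rw [← h3]; exact h2
    _ = Real.exp 1 ^ 2 * n * (n : ℝ) ^ (2 * n) := by
        rw [mul_assoc (Real.exp 1 ^ 2 * (n:ℝ)), h4]

lemma choose_sq_lb (M L K : ℕ) (hL : L ≠ 0) (hK : K ≠ 0) (hLK : L + K = M) :
    2 * Real.pi * M * (M : ℝ) ^ (2 * M) ≤
      ((M.choose L : ℕ) : ℝ) ^ 2 * Real.exp 1 ^ 4 * ((L : ℝ) * K) *
        ((L : ℝ) ^ (2 * L) * (K : ℝ) ^ (2 * K)) := by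
  have hM : M ≠ 0 := by omega
  have hc : ((M.choose L : ℕ) : ℝ) * (L.factorial : ℝ) * (K.factorial : ℝ)
      = (M.factorial : ℝ) := by
    have := Nat.choose_mul_factorial_mul_factorial (show L ≤ M by omega)
    have hMK : M - L = K := by omega
    rw [hMK] at this
    exact_mod_cast this
  have he : Real.exp 1 ^ (2 * M) = Real.exp 1 ^ (2 * L) * Real.exp 1 ^ (2 * K) := by
    rw [← pow_add]; congr 1; omega
  calc 2 * Real.pi * M * (M : ℝ) ^ (2 * M)
      ≤ ((M.factorial : ℕ) : ℝ) ^ 2 * Real.exp 1 ^ (2 * M) := fact_sq_lb M hM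
    _ = ((M.choose L : ℕ) : ℝ) ^ 2 * (((L.factorial : ℕ) : ℝ) ^ 2 * Real.exp 1 ^ (2 * L)) *
        (((K.factorial : ℕ) : ℝ) ^ 2 * Real.exp 1 ^ (2 * K)) := by
        rw [← hc, he]; ring
    _ ≤ ((M.choose L : ℕ) : ℝ) ^ 2 * (Real.exp 1 ^ 2 * L * (L : ℝ) ^ (2 * L)) *
        (Real.exp 1 ^ 2 * K * (K : ℝ) ^ (2 * K)) := by
        apply mul_le_mul _ (fact_sq_ub K hK) (by positivity) (by positivity)
        exact mul_le_mul_of_nonneg_left (fact_sq_ub L hL) (by positivity)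
    _ = ((M.choose L : ℕ) : ℝ) ^ 2 * Real.exp 1 ^ 4 * ((L : ℝ) * K) *
        ((L : ℝ) ^ (2 * L) * (K : ℝ) ^ (2 * K)) := by ring

lemma choose_sq_ub (M L K : ℕ) (hL : L ≠ 0) (hK : K ≠ 0) (hLK : L + K = M) :
    ((M.choose L : ℕ) : ℝ) ^ 2 * (4 * Real.pi ^ 2) * ((L : ℝ) * K) *
        ((L : ℝ) ^ (2 * L) * (K : ℝ) ^ (2 * K)) ≤
      Real.exp 1 ^ 2 * M * (M : ℝ) ^ (2 * M) := by
  have hM : M ≠ 0 := by omega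
  have hc : ((M.choose L : ℕ) : ℝ) * (L.factorial : ℝ) * (K.factorial : ℝ)
      = (M.factorial : ℝ) := by
    have := Nat.choose_mul_factorial_mul_factorial (show L ≤ M by omega)
    have hMK : M - L = K := by omega
    rw [hMK] at this
    exact_mod_cast this
  have he : Real.exp 1 ^ (2 * M) = Real.exp 1 ^ (2 * L) * Real.exp 1 ^ (2 * K) := by
    rw [← pow_add]; congr 1; omega
  calc ((M.choose L : ℕ) : ℝ) ^ 2 * (4 * Real.pi ^ 2) * ((L : ℝ) * K) *
        ((L : ℝ) ^ (2 * L) * (K : ℝ) ^ (2 * K))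
      = ((M.choose L : ℕ) : ℝ) ^ 2 * (2 * Real.pi * L * (L : ℝ) ^ (2 * L)) *
        (2 * Real.pi * K * (K : ℝ) ^ (2 * K)) := by ring
    _ ≤ ((M.choose L : ℕ) : ℝ) ^ 2 * (((L.factorial : ℕ) : ℝ) ^ 2 * Real.exp 1 ^ (2 * L)) *
        (((K.factorial : ℕ) : ℝ) ^ 2 * Real.exp 1 ^ (2 * K)) := by
        apply mul_le_mul _ (fact_sq_lb K hK) (by positivity) (by positivity)
        exact mul_le_mul_of_nonneg_left (fact_sq_lb L hL) (by positivity)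
    _ = ((M.factorial : ℕ) : ℝ) ^ 2 * Real.exp 1 ^ (2 * M) := by rw [← hc, he]; ring
    _ ≤ Real.exp 1 ^ 2 * M * (M : ℝ) ^ (2 * M) := fact_sq_ub M hM

end Aux

/-- Binary entropy function (base-2 logarithm). -/
noncomputable def binEntropy2 (p : ℝ) : ℝ :=
  -p * Real.logb 2 p - (1 - p) * Real.logb 2 (1 - p)

/-- **Theorem 1** (per-antenna transmit rate of MA-SM).
For `0 < L_u < M_u`, activity ratio `η = L_u/M_u`, index-modulation rate
`I = ⌊log₂ C(M_u, L_u)⌋`, per-user rate `R_u = I + L_u·S` and per-antenna rate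
`R̄ = R_u/M_u`, there exists a constant `C ∈ (C_d, C_u]` such that
`R̄ = η·S + H₂(η) + (C − log₂ M_u)/(2 M_u)`. -/
theorem per_antenna_rate (Mu Lu S : ℕ) (hL : 0 < Lu) (hM : Lu < Mu)
    (η : ℝ) (hη : η = (Lu : ℝ) / (Mu : ℝ))
    (I : ℤ) (hI : I = ⌊Real.logb 2 ((Mu.choose Lu : ℕ) : ℝ)⌋)
    (Ru : ℝ) (hRu : Ru = (I : ℝ) + (Lu : ℝ) * (S : ℝ))
    (Rbar : ℝ) (hRbar : Rbar = Ru / (Mu : ℝ))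
    (Cd Cu : ℝ)
    (hCd : Cd = Real.logb 2 (Real.pi / (2 * Real.exp 1 ^ 4)) - Real.logb 2 (η - η ^ 2))
    (hCu : Cu = Real.logb 2 (Real.exp 1 ^ 2 / (4 * Real.pi ^ 2)) - Real.logb 2 (η - η ^ 2)) :
    ∃ C : ℝ, Cd < C ∧ C ≤ Cu ∧
      Rbar = η * (S : ℝ) + binEntropy2 η + (C - Real.logb 2 (Mu : ℝ)) / (2 * (Mu : ℝ)) := by
  set K := Mu - Lu with hKdef
  have hKn : K ≠ 0 := by omega
  have hLKn : Lu + K = Mu := by omega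
  have hM0 : (0 : ℝ) < (Mu : ℝ) := by exact_mod_cast Nat.pos_of_ne_zero (by omega)
  have hL0 : (0 : ℝ) < (Lu : ℝ) := by exact_mod_cast hL
  have hK0 : (0 : ℝ) < (K : ℝ) := by exact_mod_cast Nat.pos_of_ne_zero hKn
  have hKcast : (K : ℝ) = (Mu : ℝ) - (Lu : ℝ) := by
    rw [hKdef]; push_cast [Nat.cast_sub hM.le]; ring
  have hsum : (Lu : ℝ) + (K : ℝ) = (Mu : ℝ) := by exact_mod_cast hLKn
  set c : ℝ := ((Mu.choose Lu : ℕ) : ℝ) with hcdef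
  have hc0 : (0 : ℝ) < c := by
    rw [hcdef]; exact_mod_cast Nat.choose_pos hM.le
  set T : ℝ := (Mu : ℝ) ^ Mu / ((Lu : ℝ) ^ Lu * (K : ℝ) ^ K) with hTdef
  have hT0 : (0 : ℝ) < T := by positivity
  set x : ℝ := Real.logb 2 c with hxdef
  -- basic log facts
  have hT2 : T ^ 2 = (Mu : ℝ) ^ (2 * Mu) / ((Lu : ℝ) ^ (2 * Lu) * (K : ℝ) ^ (2 * K)) := by
    rw [hTdef, div_pow, mul_pow, pow_mul', pow_mul', pow_mul']
  have h1mη : 1 - η = (K : ℝ) / (Mu : ℝ) := by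
    rw [hη, hKcast]; field_simp
  have hη0 : 0 < η := by rw [hη]; positivity
  have hη1 : η < 1 := by
    rw [hη, div_lt_one hM0]; exact_mod_cast hM
  have hA : η - η ^ 2 = ((Lu : ℝ) * K) / (Mu : ℝ) ^ 2 := by
    rw [hη, hKcast]; field_simp
  have hT : Real.logb 2 T =
      (Mu : ℝ) * Real.logb 2 (Mu : ℝ) - (Lu : ℝ) * Real.logb 2 (Lu : ℝ)
        - (K : ℝ) * Real.logb 2 (K : ℝ) := by
    rw [hTdef, Real.logb_div (by positivity) (by positivity),
      Real.logb_mul (by positivity) (by positivity),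
      Real.logb_pow, Real.logb_pow, Real.logb_pow]
    ring
  have hH : (Mu : ℝ) * binEntropy2 η = Real.logb 2 T := by
    have e1 : Real.logb 2 η = Real.logb 2 (Lu : ℝ) - Real.logb 2 (Mu : ℝ) := by
      rw [hη, Real.logb_div (by positivity) (by positivity)]
    have e2 : Real.logb 2 (1 - η) = Real.logb 2 (K : ℝ) - Real.logb 2 (Mu : ℝ) := by
      rw [h1mη, Real.logb_div (by positivity) (by positivity)]
    rw [binEntropy2, e1, e2, hT, h1mη, hη]
    field_simp
    linear_combination (Real.logb 2 (Mu : ℝ)) * hsum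
  have heta_log : Real.logb 2 (η - η ^ 2)
      = Real.logb 2 ((Lu : ℝ) * K) - 2 * Real.logb 2 (Mu : ℝ) := by
    rw [hA, Real.logb_div (by positivity) (by positivity), Real.logb_pow]
    norm_num
  -- floor facts
  have hIx : (I : ℝ) ≤ x := by
    rw [hI, hxdef, hcdef]; exact_mod_cast Int.floor_le _
  have hxI : x - 1 < (I : ℝ) := by
    rw [hI, hxdef, hcdef]; exact_mod_cast Int.sub_one_lt_floor _
  -- upper bound
  have hub := choose_sq_ub Mu Lu K (by omega) hKn hLKn
  have h5 : c ^ 2 ≤ Real.exp 1 ^ 2 * Mu * T ^ 2 / (4 * Real.pi ^ 2 * ((Lu : ℝ) * K)) := by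
    rw [le_div_iff₀ (by positivity), hT2]
    rw [show Real.exp 1 ^ 2 * (Mu : ℝ) *
        ((Mu : ℝ) ^ (2 * Mu) / ((Lu : ℝ) ^ (2 * Lu) * (K : ℝ) ^ (2 * K)))
        = (Real.exp 1 ^ 2 * (Mu : ℝ) * (Mu : ℝ) ^ (2 * Mu))
          / ((Lu : ℝ) ^ (2 * Lu) * (K : ℝ) ^ (2 * K)) from by ring]
    rw [le_div_iff₀ (by positivity)]
    calc c ^ 2 * (4 * Real.pi ^ 2 * ((Lu : ℝ) * K)) * ((Lu : ℝ) ^ (2 * Lu) * (K : ℝ) ^ (2 * K))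
        = c ^ 2 * (4 * Real.pi ^ 2) * ((Lu : ℝ) * K) * ((Lu : ℝ) ^ (2 * Lu) * (K : ℝ) ^ (2 * K)) := by
          ring
      _ ≤ Real.exp 1 ^ 2 * Mu * (Mu : ℝ) ^ (2 * Mu) := hub
  have key_ub : 2 * x ≤ Real.logb 2
      (Real.exp 1 ^ 2 * Mu * T ^ 2 / (4 * Real.pi ^ 2 * ((Lu : ℝ) * K))) := by
    have h6 : Real.logb 2 (c ^ 2) ≤ Real.logb 2
        (Real.exp 1 ^ 2 * Mu * T ^ 2 / (4 * Real.pi ^ 2 * ((Lu : ℝ) * K))) :=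
      Real.logb_le_logb_of_le one_lt_two (by positivity) h5
    rw [Real.logb_pow] at h6
    push_cast at h6
    linarith
  have decomp_ub : Real.logb 2
      (Real.exp 1 ^ 2 * Mu * T ^ 2 / (4 * Real.pi ^ 2 * ((Lu : ℝ) * K)))
      = Real.logb 2 (Real.exp 1 ^ 2 / (4 * Real.pi ^ 2)) + Real.logb 2 (Mu : ℝ)
        + 2 * Real.logb 2 T - Real.logb 2 ((Lu : ℝ) * K) := by
    rw [show Real.exp 1 ^ 2 * (Mu : ℝ) * T ^ 2 / (4 * Real.pi ^ 2 * ((Lu : ℝ) * K))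
        = Real.exp 1 ^ 2 / (4 * Real.pi ^ 2) * (Mu : ℝ) * T ^ 2 / ((Lu : ℝ) * K) from by
          field_simp; try ring]
    rw [Real.logb_div (by positivity) (by positivity),
      Real.logb_mul (by positivity) (by positivity),
      Real.logb_mul (by positivity) (by positivity), Real.logb_pow]
    push_cast
    try ring
  -- lower bound
  have hlb := choose_sq_lb Mu Lu K (by omega) hKn hLKn
  have h7 : 2 * Real.pi * Mu * T ^ 2 / (Real.exp 1 ^ 4 * ((Lu : ℝ) * K)) ≤ c ^ 2 := by
    rw [div_le_iff₀ (by positivity), hT2]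
    rw [show 2 * Real.pi * (Mu : ℝ) *
        ((Mu : ℝ) ^ (2 * Mu) / ((Lu : ℝ) ^ (2 * Lu) * (K : ℝ) ^ (2 * K)))
        = (2 * Real.pi * (Mu : ℝ) * (Mu : ℝ) ^ (2 * Mu))
          / ((Lu : ℝ) ^ (2 * Lu) * (K : ℝ) ^ (2 * K)) from by ring]
    rw [div_le_iff₀ (by positivity)]
    calc 2 * Real.pi * (Mu : ℝ) * (Mu : ℝ) ^ (2 * Mu)
        ≤ c ^ 2 * Real.exp 1 ^ 4 * ((Lu : ℝ) * K) * ((Lu : ℝ) ^ (2 * Lu) * (K : ℝ) ^ (2 * K)) := hlb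
      _ = c ^ 2 * (Real.exp 1 ^ 4 * ((Lu : ℝ) * K)) * ((Lu : ℝ) ^ (2 * Lu) * (K : ℝ) ^ (2 * K)) := by
          ring
  have key_lb : Real.logb 2
      (2 * Real.pi * Mu * T ^ 2 / (Real.exp 1 ^ 4 * ((Lu : ℝ) * K))) ≤ 2 * x := by
    have h8 : Real.logb 2
        (2 * Real.pi * Mu * T ^ 2 / (Real.exp 1 ^ 4 * ((Lu : ℝ) * K)))
        ≤ Real.logb 2 (c ^ 2) :=
      Real.logb_le_logb_of_le one_lt_two (by positivity) h7
    rw [Real.logb_pow] at h8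
    push_cast at h8
    linarith
  have hlog4 : Real.logb 2 (4 : ℝ) = 2 := by
    rw [show (4 : ℝ) = 2 ^ (2 : ℕ) from by norm_num, Real.logb_pow,
      Real.logb_self_eq_one (by norm_num : (1:ℝ) < 2)]
    norm_num
  have decomp_lb : Real.logb 2
      (2 * Real.pi * Mu * T ^ 2 / (Real.exp 1 ^ 4 * ((Lu : ℝ) * K)))
      = Real.logb 2 (Real.pi / (2 * Real.exp 1 ^ 4)) + 2 + Real.logb 2 (Mu : ℝ)
        + 2 * Real.logb 2 T - Real.logb 2 ((Lu : ℝ) * K) := by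
    rw [show 2 * Real.pi * (Mu : ℝ) * T ^ 2 / (Real.exp 1 ^ 4 * ((Lu : ℝ) * K))
        = Real.pi / (2 * Real.exp 1 ^ 4) * 4 * (Mu : ℝ) * T ^ 2 / ((Lu : ℝ) * K) from by
          field_simp; try ring]
    rw [Real.logb_div (by positivity) (by positivity),
      Real.logb_mul (by positivity) (by positivity),
      Real.logb_mul (by positivity) (by positivity),
      Real.logb_mul (by positivity) (by norm_num), Real.logb_pow, hlog4]
    push_cast
    ring
  refine ⟨2 * ((I : ℝ) - (Mu : ℝ) * binEntropy2 η) + Real.logb 2 (Mu : ℝ), ?_, ?_, ?_⟩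
  · rw [hCd, heta_log, hH]
    linarith
  · rw [hCu, heta_log, hH]
    linarith
  · rw [hRbar, hRu, hη]
    field_simp
    ring
end

section
/- Let M_u and L_u be integers with 0 < L_u < M_u, set η = L_u/M_u and I = ⌊log₂ C(M_u, L_u)⌋. Then I_d < I ≤ I_u, where I_i = (C_i − log₂ M_u)/2 + M_u·H₂(η) for i ∈ {d, u}, with C_d = log₂(π/(2e⁴)) − log₂(η − η²) and C_u = log₂(e²/(4π²)) − log₂(η − η²). -/
open Real

-- Auxiliary Stirling bounds
lemma fact_lower (n : ℕ) (hn : 0 < n) :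
    Real.sqrt (2 * Real.pi) * Real.sqrt n * ((n : ℝ) / Real.exp 1) ^ n ≤ n.factorial := by
  obtain ⟨m, rfl⟩ : ∃ m, n = m + 1 := ⟨n - 1, by omega⟩
  have heq : ((m+1).factorial : ℝ) =
      Stirling.stirlingSeq (m+1) * (Real.sqrt (2*((m+1:ℕ):ℝ)) * (((m+1:ℕ) : ℝ)/Real.exp 1)^(m+1)) := by
    rw [Stirling.stirlingSeq, div_mul_cancel₀]
    have : (0:ℝ) < ((m+1:ℕ):ℝ) := by positivity
    positivity
  have hs : Real.sqrt Real.pi ≤ Stirling.stirlingSeq (m + 1) :=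
    Stirling.stirlingSeq'_antitone.le_of_tendsto
      ((Filter.tendsto_add_atTop_iff_nat 1).mpr Stirling.tendsto_stirlingSeq_sqrt_pi) m
  rw [heq]
  have h2 : Real.sqrt (2*((m:ℝ)+1)) = Real.sqrt 2 * Real.sqrt ((m:ℝ)+1) :=
    Real.sqrt_mul (by norm_num) _
  have h2' : Real.sqrt (2*Real.pi) = Real.sqrt 2 * Real.sqrt Real.pi :=
    Real.sqrt_mul (by norm_num) _
  push_cast
  push_cast at h2 ⊢
  rw [h2, h2']
  have hx : (0:ℝ) ≤ Real.sqrt 2 * Real.sqrt ((m:ℝ)+1) * (((m:ℝ)+1)/Real.exp 1)^(m+1) := by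
    positivity
  calc Real.sqrt 2 * Real.sqrt Real.pi * Real.sqrt ((m:ℝ)+1) * (((m:ℝ)+1)/Real.exp 1)^(m+1)
      = Real.sqrt Real.pi * (Real.sqrt 2 * Real.sqrt ((m:ℝ)+1) * (((m:ℝ)+1)/Real.exp 1)^(m+1)) := by ring
    _ ≤ Stirling.stirlingSeq (m+1) * (Real.sqrt 2 * Real.sqrt ((m:ℝ)+1) * (((m:ℝ)+1)/Real.exp 1)^(m+1)) :=
        mul_le_mul_of_nonneg_right hs hx
    _ = Stirling.stirlingSeq (m+1) * (Real.sqrt 2 * Real.sqrt ((m:ℝ)+1) * (((m:ℝ)+1)/Real.exp 1)^(m+1)) := rfl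

lemma fact_upper (n : ℕ) (hn : 0 < n) :
    (n.factorial : ℝ) ≤ Real.exp 1 * Real.sqrt n * ((n : ℝ) / Real.exp 1) ^ n := by
  obtain ⟨m, rfl⟩ : ∃ m, n = m + 1 := ⟨n - 1, by omega⟩
  have heq : ((m+1).factorial : ℝ) =
      Stirling.stirlingSeq (m+1) * (Real.sqrt (2*((m+1:ℕ):ℝ)) * (((m+1:ℕ) : ℝ)/Real.exp 1)^(m+1)) := by
    rw [Stirling.stirlingSeq, div_mul_cancel₀]
    have : (0:ℝ) < ((m+1:ℕ):ℝ) := by positivity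
    positivity
  have hs : Stirling.stirlingSeq (m+1) ≤ Real.exp 1 / Real.sqrt 2 := by
    have := Stirling.stirlingSeq'_antitone (Nat.zero_le m)
    simpa [Stirling.stirlingSeq_one] using this
  rw [heq]
  have h2 : Real.sqrt (2*((m:ℝ)+1)) = Real.sqrt 2 * Real.sqrt ((m:ℝ)+1) :=
    Real.sqrt_mul (by norm_num) _
  push_cast
  push_cast at h2
  rw [h2]
  have hx : (0:ℝ) ≤ Real.sqrt 2 * Real.sqrt ((m:ℝ)+1) * (((m:ℝ)+1)/Real.exp 1)^(m+1) := by
    positivity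
  have hs2 : Real.sqrt 2 ≠ 0 := by positivity
  calc Stirling.stirlingSeq (m+1) * (Real.sqrt 2 * Real.sqrt ((m:ℝ)+1) * (((m:ℝ)+1)/Real.exp 1)^(m+1))
      ≤ (Real.exp 1 / Real.sqrt 2) * (Real.sqrt 2 * Real.sqrt ((m:ℝ)+1) * (((m:ℝ)+1)/Real.exp 1)^(m+1)) :=
        mul_le_mul_of_nonneg_right hs hx
    _ = Real.exp 1 * Real.sqrt ((m:ℝ)+1) * (((m:ℝ)+1)/Real.exp 1)^(m+1) := by
        field_simp


set_option maxHeartbeats 2000000 in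
/-- Bounds on the index-modulation rate `I = ⌊log₂ C(M_u, L_u)⌋`:
`I_d < I ≤ I_u`, where `I_i = (C_i − log₂ M_u)/2 + M_u·H₂(η)` for `i ∈ {d,u}`,
`C_d = log₂(π/(2e⁴)) − log₂(η − η²)` and `C_u = log₂(e²/(4π²)) − log₂(η − η²)`. -/
theorem index_rate_bounds (Mu Lu : ℕ) (hL : 0 < Lu) (hM : Lu < Mu)
    (η : ℝ) (hη : η = (Lu : ℝ) / (Mu : ℝ))
    (I : ℤ) (hI : I = ⌊Real.logb 2 ((Mu.choose Lu : ℕ) : ℝ)⌋)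
    (Cd Cu Id Iu : ℝ)
    (hCd : Cd = Real.logb 2 (Real.pi / (2 * Real.exp 1 ^ 4)) - Real.logb 2 (η - η ^ 2))
    (hCu : Cu = Real.logb 2 (Real.exp 1 ^ 2 / (4 * Real.pi ^ 2)) - Real.logb 2 (η - η ^ 2))
    (hId : Id = (Cd - Real.logb 2 (Mu : ℝ)) / 2 + (Mu : ℝ) * binEntropy2 η)
    (hIu : Iu = (Cu - Real.logb 2 (Mu : ℝ)) / 2 + (Mu : ℝ) * binEntropy2 η) :
    Id < (I : ℝ) ∧ (I : ℝ) ≤ Iu := by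
  obtain ⟨Ku, rfl⟩ : ∃ Ku, Mu = Lu + (Ku + 1) := ⟨Mu - Lu - 1, by omega⟩
  obtain ⟨a, rfl⟩ : ∃ a, Lu = a + 1 := ⟨Lu - 1, by omega⟩
  subst hη hI hCd hCu hId hIu
  have hl0 : (0:ℝ) < ((a+1:ℕ):ℝ) := by positivity
  have hk0 : (0:ℝ) < ((Ku+1:ℕ):ℝ) := by positivity
  have hm0 : (0:ℝ) < ((a+1+(Ku+1):ℕ):ℝ) := by positivity
  have hsub : (a+1+(Ku+1)) - (a+1) = (Ku+1) := by omega
  have hC : (((a+1+(Ku+1)).choose (a+1) : ℕ) : ℝ) = ((a+1+(Ku+1)).factorial : ℝ) / (((a+1).factorial : ℝ) * ((Ku+1).factorial : ℝ)) := by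
    rw [Nat.cast_choose ℝ (by omega : (a+1) ≤ (a+1+(Ku+1))), hsub]
  have hCpos : (0:ℝ) < (((a+1+(Ku+1)).choose (a+1) : ℕ) : ℝ) := by
    have := Nat.choose_pos (by omega : (a+1) ≤ (a+1+(Ku+1)))
    exact_mod_cast this
  -- lower bound A ≤ C
  have hA_le :
      (Real.sqrt (2*Real.pi) * Real.sqrt ((a+1+(Ku+1):ℕ):ℝ) * (((a+1+(Ku+1):ℕ):ℝ)/Real.exp 1)^(a+1+(Ku+1))) /
        ((Real.exp 1 * Real.sqrt ((a+1:ℕ):ℝ) * (((a+1:ℕ):ℝ)/Real.exp 1)^(a+1)) *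
         (Real.exp 1 * Real.sqrt ((Ku+1:ℕ):ℝ) * (((Ku+1:ℕ):ℝ)/Real.exp 1)^(Ku+1)))
        ≤ (((a+1+(Ku+1)).choose (a+1) : ℕ) : ℝ) := by
    rw [hC]
    refine div_le_div₀ (by positivity) (fact_lower (a+1+(Ku+1)) (by omega)) ?_ ?_
    · exact mul_pos (by exact_mod_cast Nat.factorial_pos (a+1)) (by exact_mod_cast Nat.factorial_pos (Ku+1))
    · exact mul_le_mul (fact_upper (a+1) (by omega)) (fact_upper (Ku+1) (by omega))
        (by exact_mod_cast Nat.zero_le _) (by positivity)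
  -- upper bound C ≤ A'
  have hA'_ge :
      (((a+1+(Ku+1)).choose (a+1) : ℕ) : ℝ) ≤
      (Real.exp 1 * Real.sqrt ((a+1+(Ku+1):ℕ):ℝ) * (((a+1+(Ku+1):ℕ):ℝ)/Real.exp 1)^(a+1+(Ku+1))) /
        ((Real.sqrt (2*Real.pi) * Real.sqrt ((a+1:ℕ):ℝ) * (((a+1:ℕ):ℝ)/Real.exp 1)^(a+1)) *
         (Real.sqrt (2*Real.pi) * Real.sqrt ((Ku+1:ℕ):ℝ) * (((Ku+1:ℕ):ℝ)/Real.exp 1)^(Ku+1))) := by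
    rw [hC]
    refine div_le_div₀ (by positivity) (fact_upper (a+1+(Ku+1)) (by omega)) (by positivity) ?_
    exact mul_le_mul (fact_lower (a+1) (by omega)) (fact_lower (Ku+1) (by omega))
      (by positivity) (by exact_mod_cast Nat.zero_le _)
  have hApos :
      (0:ℝ) < (Real.sqrt (2*Real.pi) * Real.sqrt ((a+1+(Ku+1):ℕ):ℝ) * (((a+1+(Ku+1):ℕ):ℝ)/Real.exp 1)^(a+1+(Ku+1))) /
        ((Real.exp 1 * Real.sqrt ((a+1:ℕ):ℝ) * (((a+1:ℕ):ℝ)/Real.exp 1)^(a+1)) *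
         (Real.exp 1 * Real.sqrt ((Ku+1:ℕ):ℝ) * (((Ku+1:ℕ):ℝ)/Real.exp 1)^(Ku+1))) := by positivity
  have h1m : 1 - ((a+1:ℕ):ℝ)/((a+1+(Ku+1):ℕ):ℝ) = ((Ku+1:ℕ):ℝ)/((a+1+(Ku+1):ℕ):ℝ) := by
    push_cast
    field_simp
    ring
  have hηη : ((a+1:ℕ):ℝ)/((a+1+(Ku+1):ℕ):ℝ) - (((a+1:ℕ):ℝ)/((a+1+(Ku+1):ℕ):ℝ))^2 = ((a+1:ℕ):ℝ)*((Ku+1:ℕ):ℝ)/(((a+1+(Ku+1):ℕ):ℝ))^2 := by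
    push_cast
    field_simp
    ring
  have hlog2 : Real.log 2 ≠ 0 := ne_of_gt (Real.log_pos (by norm_num))
  have h4 : Real.log 4 = 2 * Real.log 2 := by
    rw [show (4:ℝ) = 2^2 by norm_num, Real.log_pow]; push_cast; ring
  have hMcast : ((a+1+(Ku+1):ℕ):ℝ) = ((a+1:ℕ):ℝ) + ((Ku+1:ℕ):ℝ) := by push_cast; ring
  -- log identity for the lower bound
  have hlogA :
      Real.logb 2 ((Real.sqrt (2*Real.pi) * Real.sqrt ((a+1+(Ku+1):ℕ):ℝ) * (((a+1+(Ku+1):ℕ):ℝ)/Real.exp 1)^(a+1+(Ku+1))) /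
        ((Real.exp 1 * Real.sqrt ((a+1:ℕ):ℝ) * (((a+1:ℕ):ℝ)/Real.exp 1)^(a+1)) *
         (Real.exp 1 * Real.sqrt ((Ku+1:ℕ):ℝ) * (((Ku+1:ℕ):ℝ)/Real.exp 1)^(Ku+1))))
      = ((Real.logb 2 (Real.pi / (2 * Real.exp 1 ^ 4)) -
          Real.logb 2 (((a+1:ℕ):ℝ)/((a+1+(Ku+1):ℕ):ℝ) - (((a+1:ℕ):ℝ)/((a+1+(Ku+1):ℕ):ℝ)) ^ 2) - Real.logb 2 ((a+1+(Ku+1):ℕ):ℝ)) / 2 +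
          ((a+1+(Ku+1):ℕ):ℝ) * binEntropy2 (((a+1:ℕ):ℝ)/((a+1+(Ku+1):ℕ):ℝ))) + 1 := by
    rw [hηη]
    simp only [binEntropy2, h1m, Real.logb]
    simp (disch := positivity) only [Real.log_mul, Real.log_div, Real.log_pow, Real.log_sqrt, Real.log_exp]
    rw [hMcast]
    have hmne : ((a+1:ℕ):ℝ) + ((Ku+1:ℕ):ℝ) ≠ 0 := by positivity
    field_simp
    push_cast
    ring
  -- log identity for the upper bound
  have hlogA' :
      Real.logb 2 ((Real.exp 1 * Real.sqrt ((a+1+(Ku+1):ℕ):ℝ) * (((a+1+(Ku+1):ℕ):ℝ)/Real.exp 1)^(a+1+(Ku+1))) /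
        ((Real.sqrt (2*Real.pi) * Real.sqrt ((a+1:ℕ):ℝ) * (((a+1:ℕ):ℝ)/Real.exp 1)^(a+1)) *
         (Real.sqrt (2*Real.pi) * Real.sqrt ((Ku+1:ℕ):ℝ) * (((Ku+1:ℕ):ℝ)/Real.exp 1)^(Ku+1))))
      = (Real.logb 2 (Real.exp 1 ^ 2 / (4 * Real.pi ^ 2)) -
          Real.logb 2 (((a+1:ℕ):ℝ)/((a+1+(Ku+1):ℕ):ℝ) - (((a+1:ℕ):ℝ)/((a+1+(Ku+1):ℕ):ℝ)) ^ 2) - Real.logb 2 ((a+1+(Ku+1):ℕ):ℝ)) / 2 +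
          ((a+1+(Ku+1):ℕ):ℝ) * binEntropy2 (((a+1:ℕ):ℝ)/((a+1+(Ku+1):ℕ):ℝ)) := by
    rw [hηη]
    simp only [binEntropy2, h1m, Real.logb]
    simp (disch := positivity) only [Real.log_mul, Real.log_div, Real.log_pow, Real.log_sqrt, Real.log_exp, h4]
    rw [hMcast]
    have hmne : ((a+1:ℕ):ℝ) + ((Ku+1:ℕ):ℝ) ≠ 0 := by positivity
    field_simp
    push_cast
    ring
  have h₁ : ((Real.logb 2 (Real.pi / (2 * Real.exp 1 ^ 4)) -
      Real.logb 2 (((a+1:ℕ):ℝ)/((a+1+(Ku+1):ℕ):ℝ) - (((a+1:ℕ):ℝ)/((a+1+(Ku+1):ℕ):ℝ)) ^ 2) - Real.logb 2 ((a+1+(Ku+1):ℕ):ℝ)) / 2 +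
      ((a+1+(Ku+1):ℕ):ℝ) * binEntropy2 (((a+1:ℕ):ℝ)/((a+1+(Ku+1):ℕ):ℝ))) + 1 ≤ Real.logb 2 (((a+1+(Ku+1)).choose (a+1) : ℕ) : ℝ) := by
    rw [← hlogA]
    exact Real.logb_le_logb_of_le one_lt_two hApos hA_le
  have h₂ : Real.logb 2 (((a+1+(Ku+1)).choose (a+1) : ℕ) : ℝ) ≤
      (Real.logb 2 (Real.exp 1 ^ 2 / (4 * Real.pi ^ 2)) -
      Real.logb 2 (((a+1:ℕ):ℝ)/((a+1+(Ku+1):ℕ):ℝ) - (((a+1:ℕ):ℝ)/((a+1+(Ku+1):ℕ):ℝ)) ^ 2) - Real.logb 2 ((a+1+(Ku+1):ℕ):ℝ)) / 2 +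
      ((a+1+(Ku+1):ℕ):ℝ) * binEntropy2 (((a+1:ℕ):ℝ)/((a+1+(Ku+1):ℕ):ℝ)) := by
    rw [← hlogA']
    exact Real.logb_le_logb_of_le one_lt_two hCpos hA'_ge
  have hfl := Int.sub_one_lt_floor (Real.logb 2 (((a+1+(Ku+1)).choose (a+1) : ℕ) : ℝ))
  have hfl' := Int.floor_le (Real.logb 2 (((a+1+(Ku+1)).choose (a+1) : ℕ) : ℝ))
  constructor
  · linarith
  · linarith
end
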